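/- Let p be a prime, t, n ∈ ℤ_p, and s, s′ ∈ ℕ with s′ ≤ 2s. Viewing all elements in ℚ_p, let M be the 2×2 matrix over ℚ_p with rows (t, −n) and (1, 0), and let ξ be the matrix with rows (0, −1) and (p^s, 0). Then for all a, b ∈ ℚ_p, writing C := ξ⁻¹ · (a·1 + b·M) · ξ, the following are equivalent: (i) every entry of C lies in ℤ_p and the (2,1)-entry of C lies in p^{s′}·ℤ_p; (ii) a ∈ ℤ_p and b ∈ p^s·ℤ_p. -/

import Mathlib

open Matrix

/-- Let `s' ≤ 2s`, `M` the companion matrix of `X² - tX + n` over `ℚ_p`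
(with `t, n ∈ ℤ_p`), and `ξ = (0, -1; pˢ, 0)`. For `C = ξ⁻¹(a·1 + b·M)ξ`, all entries of
`C` are `p`-adic integers with `(2,1)`-entry in `p^{s'}ℤ_p` iff `a ∈ ℤ_p` and `b ∈ pˢℤ_p`
(membership expressed via the `p`-adic norm). -/
theorem optimal_embedding_nonsplit (p : ℕ) [Fact p.Prime] (t n : ℤ_[p]) (s s' : ℕ)
    (hs : s' ≤ 2 * s)
    (M ξ : Matrix (Fin 2) (Fin 2) ℚ_[p])
    (hM : M = !![(t : ℚ_[p]), -(n : ℚ_[p]); 1, 0])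
    (hξ : ξ = !![0, -1; ((p : ℚ_[p])) ^ s, 0]) :
    ∀ a b : ℚ_[p],
      ((∀ i j : Fin 2,
          ‖(ξ⁻¹ * (a • (1 : Matrix (Fin 2) (Fin 2) ℚ_[p]) + b • M) * ξ) i j‖ ≤ 1) ∧
        ‖(ξ⁻¹ * (a • (1 : Matrix (Fin 2) (Fin 2) ℚ_[p]) + b • M) * ξ) 1 0‖ ≤
          ‖((p : ℚ_[p])) ^ s'‖) ↔
      (‖a‖ ≤ 1 ∧ ‖b‖ ≤ ‖((p : ℚ_[p])) ^ s‖) := by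
  intro a b
  have hpprime : p.Prime := Fact.out
  have hp0 : ((p : ℚ_[p])) ^ s ≠ 0 :=
    pow_ne_zero _ (Nat.cast_ne_zero.mpr hpprime.ne_zero)
  have hinv : ξ⁻¹ = !![0, (((p : ℚ_[p])) ^ s)⁻¹; -1, 0] := by
    rw [hξ]
    apply Matrix.inv_eq_right_inv
    rw [Matrix.mul_fin_two, Matrix.one_fin_two]
    norm_num [mul_inv_cancel₀ hp0]
  have hC : ξ⁻¹ * (a • (1 : Matrix (Fin 2) (Fin 2) ℚ_[p]) + b • M) * ξ =
      !![a, -(b * (((p : ℚ_[p])) ^ s)⁻¹);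
         b * (n : ℚ_[p]) * ((p : ℚ_[p])) ^ s, a + b * (t : ℚ_[p])] := by
    rw [hinv, hM, hξ, Matrix.one_fin_two, Matrix.smul_of, Matrix.smul_of]
    simp only [Matrix.smul_cons, Matrix.smul_empty, smul_eq_mul, Matrix.of_add_of]
    norm_num [Matrix.mul_fin_two]
    field_simp
    exact ⟨trivial, trivial⟩
  rw [hC]
  have hps : (0 : ℝ) < ‖((p : ℚ_[p])) ^ s‖ := norm_pos_iff.mpr hp0
  have hps1 : ‖((p : ℚ_[p])) ^ s‖ ≤ 1 := by
    rw [norm_pow]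
    exact pow_le_one₀ (norm_nonneg _) Padic.norm_p_lt_one.le
  have hn1 : ‖(n : ℚ_[p])‖ ≤ 1 := by
    rw [PadicInt.padic_norm_e_of_padicInt]; exact n.norm_le_one
  have ht1 : ‖(t : ℚ_[p])‖ ≤ 1 := by
    rw [PadicInt.padic_norm_e_of_padicInt]; exact t.norm_le_one
  constructor
  · rintro ⟨h, -⟩
    have h00 := h 0 0
    have h01 := h 0 1
    simp only [Matrix.cons_val', Matrix.cons_val_zero, Matrix.cons_val_one, Matrix.head_cons,
      Matrix.empty_val', Matrix.cons_val_fin_one, Matrix.head_fin_const,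
      Matrix.of_apply] at h00 h01
    refine ⟨h00, ?_⟩
    rw [norm_neg, norm_mul, norm_inv] at h01
    calc ‖b‖ = ‖b‖ * ‖((p : ℚ_[p])) ^ s‖⁻¹ * ‖((p : ℚ_[p])) ^ s‖ := by
          field_simp
      _ ≤ 1 * ‖((p : ℚ_[p])) ^ s‖ := mul_le_mul_of_nonneg_right h01 hps.le
      _ = ‖((p : ℚ_[p])) ^ s‖ := one_mul _
  · rintro ⟨ha, hb⟩
    have hb1 : ‖b‖ ≤ 1 := hb.trans hps1
    have h10 : ‖b * (n : ℚ_[p]) * ((p : ℚ_[p])) ^ s‖ ≤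
        ‖((p : ℚ_[p])) ^ s‖ * ‖((p : ℚ_[p])) ^ s‖ := by
      rw [norm_mul, norm_mul]
      have : ‖b‖ * ‖(n : ℚ_[p])‖ ≤ ‖((p : ℚ_[p])) ^ s‖ :=
        (mul_le_mul hb hn1 (norm_nonneg _) hps.le).trans (by simp)
      exact mul_le_mul_of_nonneg_right this hps.le
    have h01 : ‖-(b * (((p : ℚ_[p])) ^ s)⁻¹)‖ ≤ 1 := by
      rw [norm_neg, norm_mul, norm_inv]
      calc ‖b‖ * ‖((p : ℚ_[p])) ^ s‖⁻¹
          ≤ ‖((p : ℚ_[p])) ^ s‖ * ‖((p : ℚ_[p])) ^ s‖⁻¹ :=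
            mul_le_mul_of_nonneg_right hb (inv_nonneg.mpr hps.le)
        _ = 1 := mul_inv_cancel₀ (ne_of_gt hps)
    have h11 : ‖a + b * (t : ℚ_[p])‖ ≤ 1 := by
      refine (Padic.nonarchimedean a (b * (t : ℚ_[p]))).trans (max_le ha ?_)
      rw [norm_mul]
      exact mul_le_one₀ hb1 (norm_nonneg _) ht1
    have key : ‖b * (n : ℚ_[p]) * ((p : ℚ_[p])) ^ s‖ ≤ ‖((p : ℚ_[p])) ^ s'‖ := by
      refine h10.trans ?_
      rw [norm_pow, norm_pow, ← pow_add]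
      exact pow_le_pow_of_le_one (norm_nonneg _) Padic.norm_p_lt_one.le (by omega)
    constructor
    · intro i j
      fin_cases i <;> fin_cases j <;>
        simp only [Matrix.cons_val', Matrix.cons_val_zero, Matrix.cons_val_one, Matrix.head_cons,
          Matrix.empty_val', Matrix.cons_val_fin_one, Matrix.head_fin_const, Matrix.of_apply,
          Fin.mk_zero, Fin.mk_one]
      · exact ha
      · exact h01
      · exact h10.trans (by nlinarith)
      · exact h11
    · simpa only [Matrix.cons_val', Matrix.cons_val_zero, Matrix.cons_val_one, Matrix.head_cons,
        Matrix.empty_val', Matrix.cons_val_fin_one, Matrix.head_fin_const,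
        Matrix.of_apply] using key
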